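/- Let ξ_1, …, ξ_n be independent real random variables, S := ξ_1 + ⋯ + ξ_n, and w < y real numbers. Then P(S > z, y ≥ max_i ξ_i and max_i ξ_i > w) ≤ Σ_i P(S − ξ_i > z − y, max_{j≠i} ξ_j ≤ y) · P(ξ_i > w) for every real z. -/

import Mathlib

open MeasureTheory ProbabilityTheory

theorem stmt_9 {Ω : Type*} [MeasurableSpace Ω] (μ : Measure Ω) [IsProbabilityMeasure μ]
    (n : ℕ) (ξ : Fin n → Ω → ℝ) (hmeas : ∀ i, Measurable (ξ i))
    (hind : iIndepFun ξ μ)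
    (w y z : ℝ) (hwy : w < y) :
    (μ {ω | z < ∑ i, ξ i ω ∧ (∀ i, ξ i ω ≤ y) ∧ (∃ i, w < ξ i ω)}).toReal ≤
      ∑ i, (μ {ω | z - y < (∑ j, ξ j ω) - ξ i ω ∧ ∀ j ≠ i, ξ j ω ≤ y}).toReal *
            (μ {ω | w < ξ i ω}).toReal := by
  set A : Fin n → Set Ω := fun i => {ω | z - y < (∑ j, ξ j ω) - ξ i ω ∧ ∀ j ≠ i, ξ j ω ≤ y}
  set B : Fin n → Set Ω := fun i => {ω | w < ξ i ω}
  have hprod : ∀ i, μ (A i ∩ B i) = μ (A i) * μ (B i) := by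
    intro i
    have hdisj : Disjoint ({i}ᶜ : Finset (Fin n)) ({i} : Finset (Fin n)) := by
      simp
    have hInd := hind.indepFun_finset ({i}ᶜ : Finset (Fin n)) {i} hdisj hmeas
    have hs : MeasurableSet {v : ({i}ᶜ : Finset (Fin n)) → ℝ |
        z - y < ∑ j, v j ∧ ∀ j, v j ≤ y} := by
      have : {v : ({i}ᶜ : Finset (Fin n)) → ℝ | z - y < ∑ j, v j ∧ ∀ j, v j ≤ y} =
          {v | z - y < ∑ j, v j} ∩ ⋂ j, {v | v j ≤ y} := by
        ext v; simp [Set.mem_iInter]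
      rw [this]
      exact (measurableSet_lt measurable_const (Finset.measurable_sum _ fun j _ =>
        measurable_pi_apply j)).inter (MeasurableSet.iInter fun j =>
        measurableSet_le (measurable_pi_apply j) measurable_const)
    have ht : MeasurableSet {v : ({i} : Finset (Fin n)) → ℝ |
        w < v ⟨i, Finset.mem_singleton_self i⟩} :=
      measurableSet_lt measurable_const (measurable_pi_apply _)
    have key := hInd.measure_inter_preimage_eq_mul _ _ hs ht
    have hA : A i = (fun ω (j : ({i}ᶜ : Finset (Fin n))) => ξ j ω) ⁻¹'
        {v | z - y < ∑ j, v j ∧ ∀ j, v j ≤ y} := by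
      ext ω
      simp only [A, Set.mem_setOf_eq, Set.mem_preimage]
      have hsum : (∑ j, ξ j ω) - ξ i ω = ∑ j : ({i}ᶜ : Finset (Fin n)), ξ j ω := by
        rw [Finset.sum_coe_sort ({i}ᶜ : Finset (Fin n)) (fun j => ξ j ω)]
        have := Finset.sum_compl_add_sum ({i} : Finset (Fin n)) (fun j => ξ j ω)
        simp only [Finset.sum_singleton] at this
        linarith
      constructor
      · rintro ⟨h1, h2⟩
        exact ⟨hsum ▸ h1, fun j => h2 j (by simpa using Finset.mem_compl.mp j.2)⟩
      · rintro ⟨h1, h2⟩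
        refine ⟨hsum ▸ h1, fun j hj => h2 ⟨j, by simpa using hj⟩⟩
    have hB : B i = (fun ω (j : ({i} : Finset (Fin n))) => ξ j ω) ⁻¹'
        {v | w < v ⟨i, Finset.mem_singleton_self i⟩} := by
      ext ω; exact Iff.rfl
    rw [hA, hB]
    exact key
  have hsub : {ω | z < ∑ i, ξ i ω ∧ (∀ i, ξ i ω ≤ y) ∧ (∃ i, w < ξ i ω)} ⊆
      ⋃ i, A i ∩ B i := by
    rintro ω ⟨h1, h2, i, h3⟩
    refine Set.mem_iUnion.2 ⟨i, ⟨⟨?_, fun j _ => h2 j⟩, h3⟩⟩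
    have := h2 i
    linarith
  have hle : μ {ω | z < ∑ i, ξ i ω ∧ (∀ i, ξ i ω ≤ y) ∧ (∃ i, w < ξ i ω)} ≤
      ∑ i, μ (A i) * μ (B i) := by
    calc μ _ ≤ μ (⋃ i, A i ∩ B i) := measure_mono hsub
    _ ≤ ∑ i, μ (A i ∩ B i) := measure_iUnion_fintype_le _ _
    _ = ∑ i, μ (A i) * μ (B i) := by simp_rw [hprod]
  calc (μ _).toReal ≤ (∑ i, μ (A i) * μ (B i)).toReal := by
        refine ENNReal.toReal_mono ?_ hle
        refine (ENNReal.sum_lt_top.2 fun i _ => ?_).ne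
        exact ENNReal.mul_lt_top (measure_lt_top μ _) (measure_lt_top μ _)
    _ = ∑ i, (μ (A i)).toReal * (μ (B i)).toReal := by
        rw [ENNReal.toReal_sum (fun i _ => (ENNReal.mul_lt_top (measure_lt_top μ _)
          (measure_lt_top μ _)).ne)]
        simp [ENNReal.toReal_mul]
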